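/- Let ξ₁, ξ₂ > 0 and η₁, η₂ ∈ ℝ. Define v := 2 if η₁ = η₂ = 0; v := 1 if (η₂ < η₁ = 0) or (η₁ < η₂ = 0) or (η₁/ξ₁ = η₂/ξ₂ > 0); and v := 0 otherwise. Then there exists a constant C < ∞ (depending only on ξ₁, ξ₂, η₁, η₂) such that for every real L > 0, the sum of 2^(η₁ℓ₁ + η₂ℓ₂) over all pairs (ℓ₁, ℓ₂) of nonnegative integers satisfying ξ₁ℓ₁ + ξ₂ℓ₂ ≤ L is at most C · 2^(L·max(0, η₁/ξ₁, η₂/ξ₂)) · (L + 1)^v. -/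

import Mathlib

open scoped Classical

open ENNReal

namespace SumExpAux

noncomputable def Tf (ξ η M : ℝ) : ℝ≥0∞ :=
  ∑' ℓ : ℕ, (if ξ * ℓ ≤ M then (2 : ℝ≥0∞) ^ (η * (ℓ : ℝ)) else 0)

lemma geom_eq (η : ℝ) : ∑' ℓ : ℕ, (2 : ℝ≥0∞) ^ (η * (ℓ : ℝ)) = (1 - (2 : ℝ≥0∞) ^ η)⁻¹ := by
  rw [← ENNReal.tsum_geometric]
  congr 1 with ℓ
  rw [ENNReal.rpow_mul, ENNReal.rpow_natCast]

lemma geom_ne_top {η : ℝ} (hη : η < 0) : (1 - (2 : ℝ≥0∞) ^ η)⁻¹ ≠ ∞ := by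
  rw [ENNReal.inv_ne_top]
  have h : (2 : ℝ≥0∞) ^ η < 1 :=
    ENNReal.rpow_lt_one_of_one_lt_of_neg (by norm_num) hη
  simpa [tsub_eq_zero_iff_le] using h.not_ge

lemma Tf_zero {ξ η M : ℝ} (hξ : 0 < ξ) (hM : M < 0) : Tf ξ η M = 0 := by
  rw [Tf]
  convert tsum_zero with ℓ
  rw [if_neg]
  intro h
  have : (0:ℝ) ≤ ξ * ℓ := by positivity
  linarith

lemma oneD_A {ξ η : ℝ} (M : ℝ) (hη : η < 0) : Tf ξ η M ≤ (1 - (2 : ℝ≥0∞) ^ η)⁻¹ := by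
  rw [← geom_eq η]
  refine ENNReal.tsum_le_tsum fun ℓ => ?_
  split <;> simp

lemma oneD_B {ξ M : ℝ} (hξ : 0 < ξ) (hM : 0 ≤ M) :
    Tf ξ 0 M ≤ ENNReal.ofReal (M / ξ + 1) := by
  set N := ⌊M / ξ⌋₊ with hN
  have key : ∀ ℓ : ℕ, ξ * ℓ ≤ M → ℓ ≤ N := by
    intro ℓ h
    exact Nat.le_floor ((le_div_iff₀ hξ).mpr (by linarith [mul_comm ξ (ℓ:ℝ)]))
  rw [Tf]
  calc (∑' ℓ : ℕ, if ξ * ℓ ≤ M then (2:ℝ≥0∞) ^ ((0:ℝ) * (ℓ:ℝ)) else 0)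
      ≤ ∑' ℓ : ℕ, (if ℓ ∈ Finset.range (N+1) then (1:ℝ≥0∞) else 0) := by
        refine ENNReal.tsum_le_tsum fun ℓ => ?_
        by_cases h : ξ * ℓ ≤ M
        · rw [if_pos h, if_pos (Finset.mem_range.mpr (Nat.lt_succ_of_le (key ℓ h)))]
          simp
        · simp [h]
    _ = ∑ ℓ ∈ Finset.range (N+1), (1:ℝ≥0∞) := by
        rw [tsum_eq_sum (s := Finset.range (N+1))]
        · exact Finset.sum_congr rfl fun ℓ hℓ => if_pos hℓ
        · intro b hb; exact if_neg hb
    _ = (N+1 : ℕ) := by simp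
    _ ≤ ENNReal.ofReal (M / ξ + 1) := by
        rw [← ENNReal.ofReal_natCast]
        refine ENNReal.ofReal_le_ofReal ?_
        push_cast
        have := Nat.floor_le (div_nonneg hM hξ.le)
        linarith [this]

lemma oneD_C {ξ η : ℝ} (M : ℝ) (hξ : 0 < ξ) (hη : 0 < η) :
    Tf ξ η M ≤ (1 - (2 : ℝ≥0∞) ^ (-η))⁻¹ * (2 : ℝ≥0∞) ^ ((η / ξ) * M) := by
  rcases lt_or_ge M 0 with hM | hM
  · rw [Tf_zero hξ hM]; exact zero_le
  set N := ⌊M / ξ⌋₊ with hNdef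
  have hN : (N : ℝ) ≤ M / ξ := Nat.floor_le (div_nonneg hM hξ.le)
  have key : ∀ ℓ : ℕ, ξ * ℓ ≤ M → ℓ ≤ N := by
    intro ℓ h
    exact Nat.le_floor ((le_div_iff₀ hξ).mpr (by linarith [mul_comm ξ (ℓ:ℝ)]))
  have hmain : η * (N:ℝ) ≤ (η / ξ) * M := by
    have h1 : η * (N:ℝ) ≤ η * (M / ξ) := by nlinarith
    have h2 : η * (M / ξ) = (η / ξ) * M := by ring
    linarith
  rw [Tf]
  calc (∑' ℓ : ℕ, if ξ * ℓ ≤ M then (2:ℝ≥0∞) ^ (η * (ℓ:ℝ)) else 0)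
      ≤ ∑' ℓ : ℕ, (if ℓ ∈ Finset.range (N+1) then
          (2:ℝ≥0∞) ^ ((η/ξ) * M) * (2:ℝ≥0∞) ^ (-η * ((N - ℓ : ℕ) : ℝ)) else 0) := by
        refine ENNReal.tsum_le_tsum fun ℓ => ?_
        by_cases h : ξ * ℓ ≤ M
        · have hℓN := key ℓ h
          rw [if_pos h, if_pos (Finset.mem_range.mpr (Nat.lt_succ_of_le hℓN))]
          rw [← ENNReal.rpow_add _ _ (by norm_num) (by norm_num)]
          refine ENNReal.rpow_le_rpow_of_exponent_le (by norm_num) ?_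
          rw [Nat.cast_sub hℓN]
          nlinarith
        · simp [h]
    _ = ∑ ℓ ∈ Finset.range (N+1),
          (2:ℝ≥0∞) ^ ((η/ξ) * M) * (2:ℝ≥0∞) ^ (-η * ((N - ℓ : ℕ) : ℝ)) := by
        rw [tsum_eq_sum (s := Finset.range (N+1))]
        · exact Finset.sum_congr rfl fun ℓ hℓ => if_pos hℓ
        · intro b hb; exact if_neg hb
    _ = (2:ℝ≥0∞) ^ ((η/ξ) * M) * ∑ ℓ ∈ Finset.range (N+1),
          (2:ℝ≥0∞) ^ (-η * ((N - ℓ : ℕ) : ℝ)) := by rw [Finset.mul_sum]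
    _ = (2:ℝ≥0∞) ^ ((η/ξ) * M) * ∑ ℓ ∈ Finset.range (N+1),
          (2:ℝ≥0∞) ^ (-η * (ℓ : ℝ)) := by
        congr 1
        have := Finset.sum_range_reflect (fun j : ℕ => (2:ℝ≥0∞) ^ (-η * (j : ℝ))) (N+1)
        simpa using this
    _ ≤ (2:ℝ≥0∞) ^ ((η/ξ) * M) * ∑' ℓ : ℕ, (2:ℝ≥0∞) ^ (-η * (ℓ : ℝ)) :=
        mul_le_mul_right (ENNReal.sum_le_tsum _) _
    _ = (1 - (2 : ℝ≥0∞) ^ (-η))⁻¹ * (2 : ℝ≥0∞) ^ ((η / ξ) * M) := by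
        rw [geom_eq]; ring

noncomputable def D (ξ₁ ξ₂ η₁ η₂ L : ℝ) : ℝ≥0∞ :=
  ∑' ℓ₁ : ℕ, ∑' ℓ₂ : ℕ,
    (if ξ₁ * ℓ₁ + ξ₂ * ℓ₂ ≤ L then (2 : ℝ≥0∞) ^ (η₁ * (ℓ₁ : ℝ) + η₂ * (ℓ₂ : ℝ)) else 0)

lemma D_eq (ξ₁ ξ₂ η₁ η₂ L : ℝ) :
    D ξ₁ ξ₂ η₁ η₂ L = ∑' ℓ₁ : ℕ, (2 : ℝ≥0∞) ^ (η₁ * (ℓ₁ : ℝ)) * Tf ξ₂ η₂ (L - ξ₁ * ℓ₁) := by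
  rw [D]
  congr 1 with ℓ₁
  rw [Tf, ← ENNReal.tsum_mul_left]
  congr 1 with ℓ₂
  rw [mul_ite, mul_zero, ← ENNReal.rpow_add _ _ (by norm_num) (by norm_num)]
  congr 1
  rw [eq_iff_iff]
  constructor <;> intro h <;> linarith

lemma D_swap (ξ₁ ξ₂ η₁ η₂ L : ℝ) : D ξ₁ ξ₂ η₁ η₂ L = D ξ₂ ξ₁ η₂ η₁ L := by
  rw [D, D, ENNReal.tsum_comm]
  congr 1 with ℓ₂
  congr 1 with ℓ₁
  rw [add_comm (ξ₁ * ℓ₁), add_comm (η₁ * (ℓ₁:ℝ))]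

lemma oneD_B' {ξ M : ℝ} (hξ : 0 < ξ) (hM : 0 ≤ M) :
    (∑' ℓ : ℕ, if ξ * ℓ ≤ M then (1:ℝ≥0∞) else 0) ≤ ENNReal.ofReal (M / ξ + 1) := by
  have h := oneD_B hξ hM
  rw [Tf] at h
  simpa using h

lemma count_bound {ξ L : ℝ} (hξ : 0 < ξ) (hL : 0 ≤ L) :
    ENNReal.ofReal (L / ξ + 1) ≤ ENNReal.ofReal (1/ξ + 1) * ENNReal.ofReal (L + 1) := by
  rw [← ENNReal.ofReal_mul (by positivity)]
  refine ENNReal.ofReal_le_ofReal ?_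
  have h : 0 < 1/ξ := by positivity
  have h2 : L / ξ = L * (1/ξ) := by ring
  nlinarith

lemma exp_split (η₁ b ξ₁ L : ℝ) (ℓ₁ : ℕ) :
    (2:ℝ≥0∞) ^ (η₁ * (ℓ₁:ℝ)) * (2:ℝ≥0∞) ^ (b * (L - ξ₁ * ℓ₁))
      = (2:ℝ≥0∞) ^ (b * L) * (2:ℝ≥0∞) ^ ((η₁ - b * ξ₁) * (ℓ₁:ℝ)) := by
  rw [← ENNReal.rpow_add _ _ (by norm_num) (by norm_num),
    ← ENNReal.rpow_add _ _ (by norm_num) (by norm_num)]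
  congr 1
  ring

lemma tsum_ite_const {c : ℕ → Prop} (K₀ : ℝ≥0∞) :
    (∑' ℓ : ℕ, if c ℓ then K₀ else 0) = K₀ * ∑' ℓ : ℕ, (if c ℓ then 1 else 0) := by
  rw [← ENNReal.tsum_mul_left]
  congr 1 with ℓ
  by_cases h : c ℓ <;> simp [h]

lemma master_CA {ξ₁ ξ₂ η₁ η₂ : ℝ} (hξ₁ : 0 < ξ₁) (hξ₂ : 0 < ξ₂) (hη₂ : 0 < η₂)
    (hab : η₁ / ξ₁ < η₂ / ξ₂) :
    ∃ K : ℝ≥0∞, K ≠ ∞ ∧ ∀ L : ℝ, 0 < L →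
      D ξ₁ ξ₂ η₁ η₂ L ≤ K * (2:ℝ≥0∞) ^ ((η₂/ξ₂) * L) * (ENNReal.ofReal (L+1)) ^ (0:ℕ) := by
  set b := η₂ / ξ₂ with hb
  have hneg : η₁ - b * ξ₁ < 0 := by
    have := (div_lt_iff₀ hξ₁).mp hab
    linarith
  refine ⟨(1 - (2:ℝ≥0∞)^(-η₂))⁻¹ * (1 - (2:ℝ≥0∞)^(η₁ - b*ξ₁))⁻¹,
    ENNReal.mul_ne_top (geom_ne_top (by linarith)) (geom_ne_top hneg), fun L hL => ?_⟩
  rw [pow_zero, mul_one, D_eq]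
  calc (∑' ℓ₁ : ℕ, (2:ℝ≥0∞) ^ (η₁ * (ℓ₁:ℝ)) * Tf ξ₂ η₂ (L - ξ₁ * ℓ₁))
      ≤ ∑' ℓ₁ : ℕ, (2:ℝ≥0∞) ^ (η₁ * (ℓ₁:ℝ)) *
          ((1 - (2:ℝ≥0∞)^(-η₂))⁻¹ * (2:ℝ≥0∞) ^ (b * (L - ξ₁ * ℓ₁))) :=
        ENNReal.tsum_le_tsum fun ℓ₁ => mul_le_mul_right (oneD_C _ hξ₂ hη₂) _
    _ = ∑' ℓ₁ : ℕ, ((1 - (2:ℝ≥0∞)^(-η₂))⁻¹ * (2:ℝ≥0∞) ^ (b * L)) *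
          (2:ℝ≥0∞) ^ ((η₁ - b * ξ₁) * (ℓ₁:ℝ)) := by
        congr 1 with ℓ₁
        rw [mul_left_comm, exp_split]
        ring
    _ = ((1 - (2:ℝ≥0∞)^(-η₂))⁻¹ * (2:ℝ≥0∞) ^ (b * L)) * (1 - (2:ℝ≥0∞)^(η₁ - b*ξ₁))⁻¹ := by
        rw [ENNReal.tsum_mul_left, geom_eq]
    _ = (1 - (2:ℝ≥0∞)^(-η₂))⁻¹ * (1 - (2:ℝ≥0∞)^(η₁ - b*ξ₁))⁻¹ * (2:ℝ≥0∞) ^ (b * L) := by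
        ring

lemma master_CB {ξ₁ ξ₂ η₁ η₂ : ℝ} (hξ₁ : 0 < ξ₁) (hξ₂ : 0 < ξ₂) (hη₂ : 0 < η₂)
    (heq : η₁ = (η₂ / ξ₂) * ξ₁) :
    ∃ K : ℝ≥0∞, K ≠ ∞ ∧ ∀ L : ℝ, 0 < L →
      D ξ₁ ξ₂ η₁ η₂ L ≤ K * (2:ℝ≥0∞) ^ ((η₂/ξ₂) * L) * (ENNReal.ofReal (L+1)) ^ (1:ℕ) := by
  set b := η₂ / ξ₂ with hb
  refine ⟨(1 - (2:ℝ≥0∞)^(-η₂))⁻¹ * ENNReal.ofReal (1/ξ₁ + 1),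
    ENNReal.mul_ne_top (geom_ne_top (by linarith)) ENNReal.ofReal_ne_top, fun L hL => ?_⟩
  rw [pow_one, D_eq]
  calc (∑' ℓ₁ : ℕ, (2:ℝ≥0∞) ^ (η₁ * (ℓ₁:ℝ)) * Tf ξ₂ η₂ (L - ξ₁ * ℓ₁))
      ≤ ∑' ℓ₁ : ℕ, (if ξ₁ * ℓ₁ ≤ L then (1 - (2:ℝ≥0∞)^(-η₂))⁻¹ * (2:ℝ≥0∞) ^ (b * L) else 0) := by
        refine ENNReal.tsum_le_tsum fun ℓ₁ => ?_
        by_cases h : ξ₁ * ℓ₁ ≤ L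
        · rw [if_pos h]
          refine le_trans (mul_le_mul_right (oneD_C _ hξ₂ hη₂) _) ?_
          rw [mul_left_comm, exp_split]
          have : η₁ - b * ξ₁ = 0 := by rw [heq]; ring
          rw [this, zero_mul, ENNReal.rpow_zero, mul_one, mul_comm]
        · rw [if_neg h, Tf_zero hξ₂ (by linarith), mul_zero]
    _ = ((1 - (2:ℝ≥0∞)^(-η₂))⁻¹ * (2:ℝ≥0∞) ^ (b * L)) *
          ∑' ℓ₁ : ℕ, (if ξ₁ * ℓ₁ ≤ L then (1:ℝ≥0∞) else 0) := tsum_ite_const _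
    _ ≤ ((1 - (2:ℝ≥0∞)^(-η₂))⁻¹ * (2:ℝ≥0∞) ^ (b * L)) * ENNReal.ofReal (L/ξ₁ + 1) :=
        mul_le_mul_right (oneD_B' hξ₁ hL.le) _
    _ ≤ ((1 - (2:ℝ≥0∞)^(-η₂))⁻¹ * (2:ℝ≥0∞) ^ (b * L)) *
          (ENNReal.ofReal (1/ξ₁ + 1) * ENNReal.ofReal (L + 1)) :=
        mul_le_mul_right (count_bound hξ₁ hL.le) _
    _ = (1 - (2:ℝ≥0∞)^(-η₂))⁻¹ * ENNReal.ofReal (1/ξ₁ + 1) * (2:ℝ≥0∞) ^ (b * L) *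
          ENNReal.ofReal (L + 1) := by ring

lemma master_AA {ξ₁ ξ₂ η₁ η₂ : ℝ} (hη₁ : η₁ < 0) (hη₂ : η₂ < 0) :
    ∃ K : ℝ≥0∞, K ≠ ∞ ∧ ∀ L : ℝ, 0 < L →
      D ξ₁ ξ₂ η₁ η₂ L ≤ K * (2:ℝ≥0∞) ^ ((0:ℝ) * L) * (ENNReal.ofReal (L+1)) ^ (0:ℕ) := by
  refine ⟨(1 - (2:ℝ≥0∞)^η₂)⁻¹ * (1 - (2:ℝ≥0∞)^η₁)⁻¹,
    ENNReal.mul_ne_top (geom_ne_top hη₂) (geom_ne_top hη₁), fun L hL => ?_⟩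
  rw [pow_zero, mul_one, zero_mul, ENNReal.rpow_zero, mul_one, D_eq]
  calc (∑' ℓ₁ : ℕ, (2:ℝ≥0∞) ^ (η₁ * (ℓ₁:ℝ)) * Tf ξ₂ η₂ (L - ξ₁ * ℓ₁))
      ≤ ∑' ℓ₁ : ℕ, (2:ℝ≥0∞) ^ (η₁ * (ℓ₁:ℝ)) * (1 - (2:ℝ≥0∞)^η₂)⁻¹ :=
        ENNReal.tsum_le_tsum fun ℓ₁ => mul_le_mul_right (oneD_A _ hη₂) _
    _ = (1 - (2:ℝ≥0∞)^η₂)⁻¹ * ∑' ℓ₁ : ℕ, (2:ℝ≥0∞) ^ (η₁ * (ℓ₁:ℝ)) := by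
        rw [ENNReal.tsum_mul_right, mul_comm]
    _ = (1 - (2:ℝ≥0∞)^η₂)⁻¹ * (1 - (2:ℝ≥0∞)^η₁)⁻¹ := by rw [geom_eq]

lemma master_AB {ξ₁ ξ₂ η₁ η₂ : ℝ} (hξ₁ : 0 < ξ₁) (hξ₂ : 0 < ξ₂) (hη₁ : η₁ = 0)
    (hη₂ : η₂ < 0) :
    ∃ K : ℝ≥0∞, K ≠ ∞ ∧ ∀ L : ℝ, 0 < L →
      D ξ₁ ξ₂ η₁ η₂ L ≤ K * (2:ℝ≥0∞) ^ ((0:ℝ) * L) * (ENNReal.ofReal (L+1)) ^ (1:ℕ) := by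
  refine ⟨(1 - (2:ℝ≥0∞)^η₂)⁻¹ * ENNReal.ofReal (1/ξ₁ + 1),
    ENNReal.mul_ne_top (geom_ne_top hη₂) ENNReal.ofReal_ne_top, fun L hL => ?_⟩
  rw [pow_one, zero_mul, ENNReal.rpow_zero, mul_one, D_eq]
  calc (∑' ℓ₁ : ℕ, (2:ℝ≥0∞) ^ (η₁ * (ℓ₁:ℝ)) * Tf ξ₂ η₂ (L - ξ₁ * ℓ₁))
      ≤ ∑' ℓ₁ : ℕ, (if ξ₁ * ℓ₁ ≤ L then (1 - (2:ℝ≥0∞)^η₂)⁻¹ else 0) := by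
        refine ENNReal.tsum_le_tsum fun ℓ₁ => ?_
        rw [hη₁, zero_mul, ENNReal.rpow_zero, one_mul]
        by_cases h : ξ₁ * ℓ₁ ≤ L
        · rw [if_pos h]; exact oneD_A _ hη₂
        · rw [if_neg h, Tf_zero hξ₂ (by linarith)]
    _ = (1 - (2:ℝ≥0∞)^η₂)⁻¹ * ∑' ℓ₁ : ℕ, (if ξ₁ * ℓ₁ ≤ L then (1:ℝ≥0∞) else 0) :=
        tsum_ite_const _
    _ ≤ (1 - (2:ℝ≥0∞)^η₂)⁻¹ * ENNReal.ofReal (L/ξ₁ + 1) :=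
        mul_le_mul_right (oneD_B' hξ₁ hL.le) _
    _ ≤ (1 - (2:ℝ≥0∞)^η₂)⁻¹ * (ENNReal.ofReal (1/ξ₁ + 1) * ENNReal.ofReal (L + 1)) :=
        mul_le_mul_right (count_bound hξ₁ hL.le) _
    _ = (1 - (2:ℝ≥0∞)^η₂)⁻¹ * ENNReal.ofReal (1/ξ₁ + 1) * ENNReal.ofReal (L + 1) := by ring

lemma master_BB {ξ₁ ξ₂ η₁ η₂ : ℝ} (hξ₁ : 0 < ξ₁) (hξ₂ : 0 < ξ₂) (hη₁ : η₁ = 0)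
    (hη₂ : η₂ = 0) :
    ∃ K : ℝ≥0∞, K ≠ ∞ ∧ ∀ L : ℝ, 0 < L →
      D ξ₁ ξ₂ η₁ η₂ L ≤ K * (2:ℝ≥0∞) ^ ((0:ℝ) * L) * (ENNReal.ofReal (L+1)) ^ (2:ℕ) := by
  refine ⟨ENNReal.ofReal (1/ξ₂ + 1) * ENNReal.ofReal (1/ξ₁ + 1),
    ENNReal.mul_ne_top ENNReal.ofReal_ne_top ENNReal.ofReal_ne_top, fun L hL => ?_⟩
  rw [zero_mul, ENNReal.rpow_zero, mul_one, D_eq]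
  calc (∑' ℓ₁ : ℕ, (2:ℝ≥0∞) ^ (η₁ * (ℓ₁:ℝ)) * Tf ξ₂ η₂ (L - ξ₁ * ℓ₁))
      ≤ ∑' ℓ₁ : ℕ, (if ξ₁ * ℓ₁ ≤ L then ENNReal.ofReal (L/ξ₂ + 1) else 0) := by
        refine ENNReal.tsum_le_tsum fun ℓ₁ => ?_
        rw [hη₁, zero_mul, ENNReal.rpow_zero, one_mul, hη₂]
        by_cases h : ξ₁ * ℓ₁ ≤ L
        · rw [if_pos h]
          refine le_trans (oneD_B hξ₂ (by linarith)) (ENNReal.ofReal_le_ofReal ?_)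
          have h0 : (0:ℝ) ≤ ξ₁ * ℓ₁ := by positivity
          have hdd : (L - ξ₁*ℓ₁)/ξ₂ ≤ L/ξ₂ := by gcongr; linarith
          linarith
        · rw [if_neg h, Tf_zero hξ₂ (by linarith)]
    _ = ENNReal.ofReal (L/ξ₂ + 1) * ∑' ℓ₁ : ℕ, (if ξ₁ * ℓ₁ ≤ L then (1:ℝ≥0∞) else 0) :=
        tsum_ite_const _
    _ ≤ ENNReal.ofReal (L/ξ₂ + 1) * ENNReal.ofReal (L/ξ₁ + 1) :=
        mul_le_mul_right (oneD_B' hξ₁ hL.le) _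
    _ ≤ (ENNReal.ofReal (1/ξ₂ + 1) * ENNReal.ofReal (L + 1)) *
          (ENNReal.ofReal (1/ξ₁ + 1) * ENNReal.ofReal (L + 1)) :=
        mul_le_mul' (count_bound hξ₂ hL.le) (count_bound hξ₁ hL.le)
    _ = ENNReal.ofReal (1/ξ₂ + 1) * ENNReal.ofReal (1/ξ₁ + 1) * ENNReal.ofReal (L + 1) ^ 2 := by
        ring

lemma bridge {ξ₁ ξ₂ η₁ η₂ : ℝ} (hξ₁ : 0 < ξ₁) (hξ₂ : 0 < ξ₂) {β : ℝ} {w v : ℕ} {K : ℝ≥0∞}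
    (hK : K ≠ ∞)
    (hβ : β ≤ max 0 (max (η₁/ξ₁) (η₂/ξ₂))) (hw : w ≤ v)
    (hD : ∀ L : ℝ, 0 < L →
      D ξ₁ ξ₂ η₁ η₂ L ≤ K * (2:ℝ≥0∞) ^ (β*L) * (ENNReal.ofReal (L+1)) ^ w) :
    ∃ C : ℝ, 0 < C ∧ ∀ L : ℝ, 0 < L →
      ∑' ℓ : {ℓ : ℕ × ℕ // ξ₁ * ℓ.1 + ξ₂ * ℓ.2 ≤ L},
        (2 : ℝ) ^ (η₁ * (ℓ.1.1 : ℝ) + η₂ * (ℓ.1.2 : ℝ))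
        ≤ C * 2 ^ (L * max 0 (max (η₁ / ξ₁) (η₂ / ξ₂))) * (L + 1) ^ v := by
  set m := max 0 (max (η₁/ξ₁) (η₂/ξ₂)) with hm
  refine ⟨K.toReal + 1, by positivity, fun L hL => ?_⟩
  set S : Set (ℕ×ℕ) := {ℓ : ℕ×ℕ | ξ₁ * ℓ.1 + ξ₂ * ℓ.2 ≤ L} with hSdef
  have hfin : S.Finite := by
    refine Set.Finite.subset ((Set.finite_Iic (⌊L/ξ₁⌋₊)).prod (Set.finite_Iic (⌊L/ξ₂⌋₊))) ?_
    rintro ⟨ℓ₁, ℓ₂⟩ h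
    simp only [hSdef, Set.mem_setOf_eq] at h
    have h1 : (0:ℝ) ≤ ξ₁ * ℓ₁ := by positivity
    have h2 : (0:ℝ) ≤ ξ₂ * ℓ₂ := by positivity
    constructor
    · exact Nat.le_floor ((le_div_iff₀ hξ₁).mpr (by linarith [mul_comm ξ₁ (ℓ₁:ℝ)]))
    · exact Nat.le_floor ((le_div_iff₀ hξ₂).mpr (by linarith [mul_comm ξ₂ (ℓ₂:ℝ)]))
  haveI : Finite S := hfin.to_subtype
  have hsummable : Summable (fun ℓ : S => (2:ℝ) ^ (η₁ * (ℓ.1.1 : ℝ) + η₂ * (ℓ.1.2 : ℝ))) :=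
    Summable.of_finite
  have hRHS : (0:ℝ) ≤ (K.toReal + 1) * 2 ^ (L * m) * (L+1) ^ v := by positivity
  rw [← ENNReal.ofReal_le_ofReal_iff hRHS]
  have h1le : (1:ℝ≥0∞) ≤ ENNReal.ofReal (L+1) := ENNReal.one_le_ofReal.mpr (by linarith)
  calc ENNReal.ofReal (∑' ℓ : S, (2:ℝ) ^ (η₁ * (ℓ.1.1 : ℝ) + η₂ * (ℓ.1.2 : ℝ)))
      = ∑' ℓ : S, ENNReal.ofReal ((2:ℝ) ^ (η₁ * (ℓ.1.1 : ℝ) + η₂ * (ℓ.1.2 : ℝ))) :=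
        ENNReal.ofReal_tsum_of_nonneg (fun _ => by positivity) hsummable
    _ = ∑' ℓ : S, (2:ℝ≥0∞) ^ (η₁ * (ℓ.1.1 : ℝ) + η₂ * (ℓ.1.2 : ℝ)) := by
        congr 1 with ℓ
        rw [← ENNReal.ofReal_rpow_of_pos (by norm_num : (0:ℝ) < 2)]
        norm_num
    _ = ∑' ℓ : ℕ×ℕ,
          S.indicator (fun ℓ : ℕ×ℕ => (2:ℝ≥0∞) ^ (η₁ * (ℓ.1 : ℝ) + η₂ * (ℓ.2 : ℝ))) ℓ :=
        tsum_subtype S (fun p : ℕ×ℕ => (2:ℝ≥0∞) ^ (η₁ * (p.1 : ℝ) + η₂ * (p.2 : ℝ)))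
    _ = D ξ₁ ξ₂ η₁ η₂ L := by
        rw [D, ← ENNReal.tsum_prod' (f := fun p : ℕ×ℕ =>
          if ξ₁ * p.1 + ξ₂ * p.2 ≤ L then (2:ℝ≥0∞) ^ (η₁ * (p.1 : ℝ) + η₂ * (p.2 : ℝ)) else 0)]
        exact tsum_congr fun ℓ => by simp [Set.indicator_apply, hSdef]
    _ ≤ K * (2:ℝ≥0∞) ^ (β*L) * (ENNReal.ofReal (L+1)) ^ w := hD L hL
    _ ≤ ENNReal.ofReal (K.toReal + 1) * (2:ℝ≥0∞) ^ (L*m) * (ENNReal.ofReal (L+1)) ^ v := by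
        refine mul_le_mul' (mul_le_mul' ?_ ?_) ?_
        · exact le_trans (le_of_eq (ENNReal.ofReal_toReal hK).symm)
            (ENNReal.ofReal_le_ofReal (by linarith))
        · refine ENNReal.rpow_le_rpow_of_exponent_le (by norm_num) ?_
          rw [mul_comm]
          exact mul_le_mul_of_nonneg_left hβ hL.le
        · exact pow_le_pow_right₀ h1le hw
    _ = ENNReal.ofReal ((K.toReal + 1) * 2 ^ (L*m) * (L+1) ^ v) := by
        rw [ENNReal.ofReal_mul (by positivity), ENNReal.ofReal_mul (by positivity),
          ENNReal.ofReal_pow (by linarith), ← ENNReal.ofReal_rpow_of_pos (by norm_num : (0:ℝ) < 2)]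
        norm_num

theorem sum_exp_index_set' (ξ₁ ξ₂ η₁ η₂ : ℝ) (hξ₁ : 0 < ξ₁) (hξ₂ : 0 < ξ₂)
    (v : ℕ)
    (hv : v = if η₁ = 0 ∧ η₂ = 0 then 2
      else if (η₂ < 0 ∧ η₁ = 0) ∨ (η₁ < 0 ∧ η₂ = 0) ∨
          (η₁ / ξ₁ = η₂ / ξ₂ ∧ 0 < η₁ / ξ₁) then 1
      else 0) :
    ∃ C : ℝ, 0 < C ∧ ∀ L : ℝ, 0 < L →
      ∑' ℓ : {ℓ : ℕ × ℕ // ξ₁ * ℓ.1 + ξ₂ * ℓ.2 ≤ L},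
        (2 : ℝ) ^ (η₁ * (ℓ.1.1 : ℝ) + η₂ * (ℓ.1.2 : ℝ))
        ≤ C * 2 ^ (L * max 0 (max (η₁ / ξ₁) (η₂ / ξ₂))) * (L + 1) ^ v := by
  have hbm : η₂ / ξ₂ ≤ max 0 (max (η₁ / ξ₁) (η₂ / ξ₂)) :=
    (le_max_right _ _).trans (le_max_right 0 _)
  have ham : η₁ / ξ₁ ≤ max 0 (max (η₁ / ξ₁) (η₂ / ξ₂)) :=
    (le_max_left _ _).trans (le_max_right 0 _)
  have h0m : (0:ℝ) ≤ max 0 (max (η₁ / ξ₁) (η₂ / ξ₂)) := le_max_left _ _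
  rcases lt_trichotomy η₁ 0 with h1 | h1 | h1
  · rcases lt_trichotomy η₂ 0 with h2 | h2 | h2
    · obtain ⟨K, hK, hD⟩ := master_AA (ξ₁ := ξ₁) (ξ₂ := ξ₂) h1 h2
      exact bridge hξ₁ hξ₂ hK h0m (Nat.zero_le _) hD
    · -- η₁ < 0, η₂ = 0 : swapped AB, v = 1
      obtain ⟨K, hK, hD⟩ := master_AB hξ₂ hξ₁ h2 h1
      have hv1 : 1 ≤ v := by
        rw [hv, if_neg (by simp [h1.ne]), if_pos (Or.inr (Or.inl ⟨h1, h2⟩))]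
      exact bridge hξ₁ hξ₂ hK h0m hv1 (fun L hL => (D_swap ξ₁ ξ₂ η₁ η₂ L) ▸ hD L hL)
    · -- η₁ < 0 < η₂ : CA, v = 0 suffices
      have hab : η₁ / ξ₁ < η₂ / ξ₂ :=
        lt_of_lt_of_le (div_neg_of_neg_of_pos h1 hξ₁) (le_of_lt (div_pos h2 hξ₂))
      obtain ⟨K, hK, hD⟩ := master_CA hξ₁ hξ₂ h2 hab
      exact bridge hξ₁ hξ₂ hK hbm (Nat.zero_le _) hD
  · rcases lt_trichotomy η₂ 0 with h2 | h2 | h2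
    · obtain ⟨K, hK, hD⟩ := master_AB hξ₁ hξ₂ h1 h2
      have hv1 : 1 ≤ v := by
        rw [hv, if_neg (by simp [h2.ne]), if_pos (Or.inl ⟨h2, h1⟩)]
      exact bridge hξ₁ hξ₂ hK h0m hv1 hD
    · obtain ⟨K, hK, hD⟩ := master_BB hξ₁ hξ₂ h1 h2
      have hv2 : 2 ≤ v := by rw [hv, if_pos ⟨h1, h2⟩]
      exact bridge hξ₁ hξ₂ hK h0m hv2 hD
    · have hab : η₁ / ξ₁ < η₂ / ξ₂ := by
        rw [h1, zero_div]
        exact div_pos h2 hξ₂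
      obtain ⟨K, hK, hD⟩ := master_CA hξ₁ hξ₂ h2 hab
      exact bridge hξ₁ hξ₂ hK hbm (Nat.zero_le _) hD
  · rcases lt_trichotomy (η₁ / ξ₁) (η₂ / ξ₂) with hab | hab | hab
    · have hb : 0 < η₂ := by
        have hbpos : 0 < η₂ / ξ₂ := lt_trans (div_pos h1 hξ₁) hab
        have := mul_pos hbpos hξ₂
        rwa [div_mul_cancel₀ _ hξ₂.ne'] at this
      obtain ⟨K, hK, hD⟩ := master_CA hξ₁ hξ₂ hb hab
      exact bridge hξ₁ hξ₂ hK hbm (Nat.zero_le _) hD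
    · have hapos : 0 < η₁ / ξ₁ := div_pos h1 hξ₁
      have hb : 0 < η₂ := by
        have hbpos : 0 < η₂ / ξ₂ := hab ▸ hapos
        have := mul_pos hbpos hξ₂
        rwa [div_mul_cancel₀ _ hξ₂.ne'] at this
      have heq : η₁ = (η₂ / ξ₂) * ξ₁ := by
        rw [← hab]
        field_simp
      obtain ⟨K, hK, hD⟩ := master_CB hξ₁ hξ₂ hb heq
      have hv1 : 1 ≤ v := by
        rw [hv, if_neg (by simp [h1.ne']), if_pos (Or.inr (Or.inr ⟨hab, hapos⟩))]
      exact bridge hξ₁ hξ₂ hK hbm hv1 hD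
    · obtain ⟨K, hK, hD⟩ := master_CA hξ₂ hξ₁ h1 hab
      exact bridge hξ₁ hξ₂ hK ham (Nat.zero_le _)
        (fun L hL => (D_swap ξ₁ ξ₂ η₁ η₂ L) ▸ hD L hL)

end SumExpAux

/-- For `ξ₁, ξ₂ > 0` and `η₁, η₂ ∈ ℝ`, with `v` the logarithmic power defined
by cases, there is a constant `C < ∞` such that for every `L > 0`, the sum of
`2^(η₁ℓ₁ + η₂ℓ₂)` over the (finite) set of pairs `(ℓ₁, ℓ₂)` of nonnegative integers with
`ξ₁ℓ₁ + ξ₂ℓ₂ ≤ L` is at most `C · 2^(L·max(0, η₁/ξ₁, η₂/ξ₂)) · (L+1)^v`. -/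
theorem sum_exp_index_set (ξ₁ ξ₂ η₁ η₂ : ℝ) (hξ₁ : 0 < ξ₁) (hξ₂ : 0 < ξ₂)
    (v : ℕ)
    (hv : v = if η₁ = 0 ∧ η₂ = 0 then 2
      else if (η₂ < 0 ∧ η₁ = 0) ∨ (η₁ < 0 ∧ η₂ = 0) ∨
          (η₁ / ξ₁ = η₂ / ξ₂ ∧ 0 < η₁ / ξ₁) then 1
      else 0) :
    ∃ C : ℝ, 0 < C ∧ ∀ L : ℝ, 0 < L →
      ∑' ℓ : {ℓ : ℕ × ℕ // ξ₁ * ℓ.1 + ξ₂ * ℓ.2 ≤ L},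
        (2 : ℝ) ^ (η₁ * (ℓ.1.1 : ℝ) + η₂ * (ℓ.1.2 : ℝ))
        ≤ C * 2 ^ (L * max 0 (max (η₁ / ξ₁) (η₂ / ξ₂))) * (L + 1) ^ v := by
  exact SumExpAux.sum_exp_index_set' ξ₁ ξ₂ η₁ η₂ hξ₁ hξ₂ v hv
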